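/- Let G be a torsion group and let Γ be a finitely generated abelian group. Then every group homomorphism G → Aut(Γ) has finite image. -/

import Mathlib

open AlgebraicGeometry CategoryTheory CategoryTheory.Limits

universe u v

noncomputable section

attribute [local instance] MvPolynomial.gradedAlgebra

/-- `Spec` of a commutative ring, as a scheme. -/
abbrev SpecOf (R : Type u) [CommRing R] : Scheme.{u} :=
  Spec (CommRingCat.of R)

/-- The morphism `Spec S ⟶ Spec R` induced by a ring homomorphism `R →+* S`. -/
abbrev specMap {R S : Type u} [CommRing R] [CommRing S] (f : R →+* S) :
    SpecOf S ⟶ SpecOf R :=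
  Spec.map (CommRingCat.ofHom f)

/-- Projective `(n-1)`-space over `k`, i.e. `Proj k[x_0, …, x_{n-1}]` with its
standard grading. -/
def ProjSpace (k : Type u) [CommRing k] (n : ℕ) : Scheme.{u} :=
  Proj (MvPolynomial.homogeneousSubmodule (Fin n) k)

/-- The structure morphism `ℙⁿ_k ⟶ Spec k`. -/
def projSpaceStruct (k : Type u) [CommRing k] (n : ℕ) :
    ProjSpace k n ⟶ SpecOf k :=
  Proj.toSpecZero (MvPolynomial.homogeneousSubmodule (Fin n) k) ≫
    Spec.map (CommRingCat.ofHom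
      ((GradedRing.projZeroRingHom'
        (MvPolynomial.homogeneousSubmodule (Fin n) k)).comp MvPolynomial.C))

/-- The `i`-fold composition `f^i` of an endomorphism `f : X ⟶ X`, with `f^0 = 𝟙 X`. -/
def iterateHom {X : Scheme.{u}} (f : X ⟶ X) : ℕ → (X ⟶ X)
  | 0 => 𝟙 X
  | n + 1 => iterateHom f n ≫ f

/-- `X`, with structure morphism `sX`, is a variety over `k`: it is integral and
separated and of finite type over `k`. -/
def IsVarietyOver (k : Type u) [Field k] (X : Scheme.{u}) (sX : X ⟶ SpecOf k) : Prop :=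
  AlgebraicGeometry.IsIntegral X ∧ IsSeparated sX ∧ LocallyOfFiniteType sX ∧ QuasiCompact sX

/-- `X` is a projective variety over `k`: a variety admitting a closed immersion
into some projective space over `k`, compatibly with the structure morphisms. -/
def IsProjVarietyOver (k : Type u) [Field k] (X : Scheme.{u}) (sX : X ⟶ SpecOf k) : Prop :=
  IsVarietyOver k X sX ∧
    ∃ (n : ℕ) (ι : X ⟶ ProjSpace k n),
      IsClosedImmersion ι ∧ ι ≫ projSpaceStruct k n = sX

/-- `X` (with structure morphism `sX : X ⟶ Spec k`) is arithmetically hyperbolic over `k`: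
for every finitely generated subring `A ⊆ k` and every finite type separated scheme `𝒳`
over `A` whose base change to `k` is isomorphic to `X` over `k`, the set of sections
`𝒳(A)` is finite. -/
def IsArithmeticallyHyperbolic (k : Type u) [Field k] (X : Scheme.{u})
    (sX : X ⟶ SpecOf k) : Prop :=
  ∀ (A : Subring k), A.FG →
    ∀ (𝒳 : Scheme.{u}) (s𝒳 : 𝒳 ⟶ SpecOf A),
      LocallyOfFiniteType s𝒳 → QuasiCompact s𝒳 → IsSeparated s𝒳 →
      (∃ e : pullback s𝒳 (specMap A.subtype) ≅ X,
        e.hom ≫ sX = pullback.snd s𝒳 (specMap A.subtype)) →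
      {s : SpecOf ↥A ⟶ 𝒳 | s ≫ s𝒳 = 𝟙 (SpecOf ↥A)}.Finite

/-- `C` is a smooth quasi-projective curve over `k`: smooth, integral, separated, of
finite type, of dimension one, and admitting an immersion into some projective space
over `k`. -/
def IsSmoothQuasiProjCurve (k : Type u) [Field k] (C : Scheme.{u}) (sC : C ⟶ SpecOf k) : Prop :=
  IsSmooth sC ∧ AlgebraicGeometry.IsIntegral C ∧ IsSeparated sC ∧
    LocallyOfFiniteType sC ∧ QuasiCompact sC ∧
    topologicalKrullDim C = 1 ∧
    ∃ (n : ℕ) (ι : C ⟶ ProjSpace k n), IsImmersion ι ∧ ι ≫ projSpaceStruct k n = sC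

/-- `X` is mildly bounded over `k`: for every smooth quasi-projective curve `C` over `k`
there are `m ≥ 1` and `k`-points `c_1, …, c_m` of `C` such that for all `k`-points
`x_1, …, x_m` of `X` the set of `k`-morphisms `f : C → X` with `f(c_i) = x_i` is finite. -/
def IsMildlyBounded (k : Type u) [Field k] (X : Scheme.{u}) (sX : X ⟶ SpecOf k) : Prop :=
  ∀ (C : Scheme.{u}) (sC : C ⟶ SpecOf k), IsSmoothQuasiProjCurve k C sC →
    ∃ m : ℕ, 1 ≤ m ∧ ∃ c : Fin m → (SpecOf k ⟶ C),
      (∀ i, c i ≫ sC = 𝟙 (SpecOf k)) ∧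
      ∀ x : Fin m → (SpecOf k ⟶ X), (∀ i, x i ≫ sX = 𝟙 (SpecOf k)) →
        {f : C ⟶ X | f ≫ sX = sC ∧ ∀ i, c i ≫ f = x i}.Finite

/-- The base change `X_K` of a `k`-scheme `X` along a ring homomorphism `k →+* K`. -/
def baseChange {k K : Type u} [CommRing k] [CommRing K] (φ : k →+* K)
    {X : Scheme.{u}} (sX : X ⟶ SpecOf k) : Scheme.{u} :=
  pullback sX (specMap φ)

/-- The structure morphism `X_K ⟶ Spec K` of the base change. -/
def baseChangeStruct {k K : Type u} [CommRing k] [CommRing K] (φ : k →+* K)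
    {X : Scheme.{u}} (sX : X ⟶ SpecOf k) : baseChange φ sX ⟶ SpecOf K :=
  pullback.snd sX (specMap φ)


section AuxStatement7

variable {ι : Type*} [Fintype ι] [DecidableEq ι]

lemma pow_entry_dvd {d : ℤ} {B : Matrix ι ι ℤ} (h : ∀ i j, d ∣ B i j) :
    ∀ m : ℕ, 1 ≤ m → ∀ i j, d ^ m ∣ (B ^ m) i j := by
  intro m
  induction m with
  | zero => omega
  | succ n ih =>
    intro _ i j
    rcases Nat.eq_or_lt_of_le (Nat.one_le_iff_ne_zero.mpr (by omega) : 1 ≤ n + 1) with h1 | h1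
    · simp only [← h1, pow_one]; exact h i j
    · have hn : 1 ≤ n := by omega
      rw [pow_succ, pow_succ, Matrix.mul_apply]
      exact Finset.dvd_sum fun k _ => mul_dvd_mul (ih hn i k) (h k j)

lemma key_prime {p : ℕ} (hp : p.Prime) {B : Matrix ι ι ℤ}
    (h3 : ∀ i j, (3:ℤ) ∣ B i j) (hpow : (1 + B) ^ p = 1) : B = 0 := by
  by_contra hB
  have hex : ∃ i j, B i j ≠ 0 := by
    by_contra h; push_neg at h; exact hB (by ext i j; simp [h i j])
  obtain ⟨i0, j0, hij⟩ := hex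
  set P : ℕ → Prop := fun k => ∀ i j, (3:ℤ) ^ k ∣ B i j with hP
  have hPle : ∀ k, P k → k ≤ (B i0 j0).natAbs := by
    intro k hk
    have h1 : (3:ℤ) ^ k ∣ B i0 j0 := hk i0 j0
    have h2 : (3:ℤ) ^ k ≤ |B i0 j0| :=
      Int.le_of_dvd (abs_pos.mpr hij) ((dvd_abs _ _).mpr h1)
    have h3' : (k : ℤ) < 3 ^ k := by
      exact_mod_cast (Nat.lt_pow_self (by norm_num : 1 < 3) : k < 3 ^ k)
    have h4 : (k : ℤ) < (B i0 j0).natAbs := by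
      rw [Int.abs_eq_natAbs] at h2; omega
    exact_mod_cast h4.le
  set b := (B i0 j0).natAbs with hb
  haveI := Classical.decPred P
  set k := Nat.findGreatest P b with hkdef
  have hP1 : P 1 := by intro i j; simpa using h3 i j
  have hk1 : 1 ≤ k := Nat.le_findGreatest (hPle 1 hP1) hP1
  have hPk : P k := Nat.findGreatest_spec (hPle 1 hP1) hP1
  have hnot : ¬ P (k + 1) := by
    intro h
    exact Nat.findGreatest_is_greatest (Nat.lt_succ_self k) (hPle _ h) h
  apply hnot
  obtain ⟨n, rfl⟩ : ∃ n, p = n + 2 := ⟨p - 2, by have := hp.two_le; omega⟩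
  have hexp : (1 : Matrix ι ι ℤ) =
      ∑ m ∈ Finset.range (n + 2 + 1), ((n + 2).choose m : ℤ) • B ^ m := by
    rw [← hpow, add_comm, (Commute.one_right B).add_pow]
    refine Finset.sum_congr rfl fun m _ => ?_
    rw [one_pow, mul_one, ← (Nat.cast_commute ((n+2).choose m) (B ^ m)).eq,
      ← nsmul_eq_mul, ← Nat.cast_smul_eq_nsmul ℤ]
  rw [Finset.sum_range_succ', Finset.sum_range_succ'] at hexp
  rw [Nat.choose_zero_right, Nat.choose_one_right, pow_zero, pow_one,
    Nat.cast_one, one_smul] at hexp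
  have h0 : (∑ i ∈ Finset.range (n + 1), ((n + 2).choose (i + 1 + 1) : ℤ) • B ^ (i + 1 + 1))
      + ((n + 2 : ℕ) : ℤ) • B = 0 := add_eq_right.mp hexp.symm
  have heq : ∀ i j, ((n + 2 : ℕ) : ℤ) * B i j =
      -(∑ i' ∈ Finset.range (n + 1), ((n + 2).choose (i' + 1 + 1) : ℤ) • B ^ (i' + 1 + 1)) i j := by
    intro i j
    have := congrFun (congrFun (congrArg (fun M => M) h0) i) j
    have h2 : ((∑ i' ∈ Finset.range (n + 1), ((n + 2).choose (i' + 1 + 1) : ℤ) • B ^ (i' + 1 + 1))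
        + ((n + 2 : ℕ) : ℤ) • B) i j = (0 : Matrix ι ι ℤ) i j := by rw [h0]
    simp only [Matrix.add_apply, Matrix.smul_apply, smul_eq_mul, Matrix.zero_apply,
      Matrix.neg_apply] at h2 ⊢
    linarith
  have hpk : ∀ m : ℕ, 2 ≤ m → ∀ i j, (3:ℤ) ^ (2 * k) ∣ (B ^ m) i j := by
    intro m hm i j
    have h1 := pow_entry_dvd hPk m (by omega) i j
    rw [← pow_mul] at h1
    exact dvd_trans (pow_dvd_pow 3 (by nlinarith)) h1
  by_cases hp3 : n + 2 = 3
  · -- p = 3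
    have hn1 : n = 1 := by omega
    subst hn1
    intro i j
    have h3' := heq i j
    rw [Finset.sum_range_succ, Finset.sum_range_one] at h3'
    simp only [Matrix.neg_apply, Matrix.add_apply, Matrix.smul_apply, smul_eq_mul] at h3'
    norm_num at h3'
    -- h3' : 3 * B i j = -(3 * (B^2) i j + (B^3) i j)
    have hd1 : (3:ℤ) ^ (2 * k + 1) ∣ 3 * (B ^ 2) i j := by
      rw [pow_succ, mul_comm ((3:ℤ) ^ (2*k)) 3]
      exact mul_dvd_mul_left 3 (hpk 2 le_rfl i j)
    have hd2 : (3:ℤ) ^ (2 * k + 1) ∣ (B ^ 3) i j := by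
      have h1 := pow_entry_dvd hPk 3 (by omega) i j
      rw [← pow_mul] at h1
      exact dvd_trans (pow_dvd_pow 3 (by omega)) h1
    have hd : (3:ℤ) ^ (2 * k + 1) ∣ 3 * B i j := by
      rw [h3']
      exact dvd_add (dvd_neg.mpr hd2) (dvd_neg.mpr hd1)
    have hd' : (3:ℤ) ^ (2 * k) ∣ B i j := by
      rw [pow_succ, mul_comm ((3:ℤ) ^ (2*k)) 3] at hd
      exact (mul_dvd_mul_iff_left (by norm_num : (3:ℤ) ≠ 0)).mp hd
    exact dvd_trans (pow_dvd_pow 3 (by omega)) hd'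
  · -- p ≠ 3
    intro i j
    have hsum : (3:ℤ) ^ (2 * k) ∣
        (∑ i' ∈ Finset.range (n + 1), ((n + 2).choose (i' + 1 + 1) : ℤ) • B ^ (i' + 1 + 1)) i j := by
      rw [Matrix.sum_apply]
      refine Finset.dvd_sum fun m _ => ?_
      rw [Matrix.smul_apply, smul_eq_mul]
      exact Dvd.dvd.mul_left (hpk _ (by omega) i j) _
    have hd : (3:ℤ) ^ (2 * k) ∣ ((n + 2 : ℕ) : ℤ) * B i j := by
      rw [heq i j]; exact dvd_neg.mpr hsum
    have hcop : IsCoprime ((3:ℤ) ^ (2 * k)) ((n + 2 : ℕ) : ℤ) := by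
      have h1 : Nat.Coprime 3 (n + 2) :=
        (Nat.coprime_primes (by norm_num) hp).mpr (by omega)
      exact (Int.isCoprime_iff_gcd_eq_one.mpr (by exact_mod_cast h1)).pow_left
    have hd' : (3:ℤ) ^ (2 * k) ∣ B i j := hcop.dvd_of_dvd_mul_left hd
    exact dvd_trans (pow_dvd_pow 3 (by omega)) hd'

lemma eq_one_of_red_eq_one {A : Matrix ι ι ℤ}
    (hA : A.map (Int.cast : ℤ → ZMod 3) = 1) {m : ℕ} (hm : m ≠ 0) (hpow : A ^ m = 1) :
    A = 1 := by
  induction m using Nat.strong_induction_on with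
  | _ m ih =>
    by_cases h1 : m = 1
    · rw [h1, pow_one] at hpow; exact hpow
    · obtain ⟨p, hp, hdvd⟩ := Nat.exists_prime_and_dvd h1
      have hqm : m / p * p = m := Nat.div_mul_cancel hdvd
      set C := A ^ (m / p) with hC
      have hCp : C ^ p = 1 := by rw [hC, ← pow_mul, hqm, hpow]
      have hredC : C.map (Int.cast : ℤ → ZMod 3) = 1 := by
        have : C.map (Int.cast : ℤ → ZMod 3) =
            ((Int.castRingHom (ZMod 3)).mapMatrix A) ^ (m / p) := by
          rw [hC, ← map_pow]; rfl
        rw [this]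
        have hA' : (Int.castRingHom (ZMod 3)).mapMatrix A = 1 := hA
        rw [hA', one_pow]
      have hB3 : ∀ i j, (3:ℤ) ∣ (C - 1) i j := by
        intro i j
        have hmain : ((C - 1).map (Int.cast : ℤ → ZMod 3)) i j = 0 := by
          have : (C - 1).map (Int.cast : ℤ → ZMod 3) =
              (Int.castRingHom (ZMod 3)).mapMatrix C - 1 := by
            rw [Matrix.map_sub _ (fun a b => by push_cast; ring),
              Matrix.map_one _ (by norm_num) (by norm_num)]
            rfl
          rw [this]
          have hredC' : (Int.castRingHom (ZMod 3)).mapMatrix C = 1 := hredC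
          rw [hredC', sub_self, Matrix.zero_apply]
        have h0 : (((C - 1) i j : ℤ) : ZMod 3) = 0 := by
          simpa [Matrix.map_apply] using hmain
        exact_mod_cast (ZMod.intCast_zmod_eq_zero_iff_dvd _ 3).mp h0
      have hBzero : C - 1 = 0 := by
        apply key_prime hp hB3
        rw [add_sub_cancel]
        exact hCp
      have hC1 : A ^ (m / p) = 1 := by rw [← hC, sub_eq_zero.mp hBzero]
      have hlt : m / p < m := Nat.div_lt_self (Nat.pos_of_ne_zero hm) hp.one_lt
      have hne : m / p ≠ 0 := by
        intro h; rw [h] at hqm; simp at hqm; omega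
      exact ih _ hlt hne hC1

lemma unit_eq_one_of_finOrder {g : (Matrix ι ι ℤ)ˣ} (hfin : IsOfFinOrder g)
    (hred : Units.map ((Int.castRingHom (ZMod 3)).mapMatrix.toMonoidHom) g = 1) : g = 1 := by
  have hm : (g : Matrix ι ι ℤ) ^ orderOf g = 1 := by
    rw [← Units.val_pow_eq_pow_val, pow_orderOf_eq_one g, Units.val_one]
  have hA : (g : Matrix ι ι ℤ).map (Int.cast : ℤ → ZMod 3) = 1 := by
    have h := congrArg Units.val hred
    simpa using h
  exact Units.ext (eq_one_of_red_eq_one hA hfin.orderOf_pos.ne' hm)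

lemma finite_addHom (Γ : Type*) (A : Type*) [AddCommGroup Γ] [AddGroup.FG Γ]
    [AddCommGroup A] [Finite A] : Finite (Γ →+ A) := by
  obtain ⟨S, hS⟩ := (‹AddGroup.FG Γ›.out)
  have hinj : Function.Injective (fun (f : Γ →+ A) (s : (S : Set Γ)) => f s) := by
    intro f g h
    exact AddMonoidHom.eq_of_eqOn_dense hS fun x hx => congrFun h ⟨x, hx⟩
  exact Finite.of_injective _ hinj

end AuxStatement7

/-- Every homomorphism from a torsion group to the automorphism group of a finitely
generated abelian group has finite image. -/
theorem statement7 {G : Type u} {Γ : Type v} [Group G] [AddCommGroup Γ] [AddGroup.FG Γ]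
    (hG : ∀ g : G, IsOfFinOrder g) (φ : G →* Multiplicative (AddAut Γ)) :
    (Set.range φ).Finite := by
  classical
  letI : Group (AddAut Γ) := inferInstanceAs (Group (Multiplicative (AddAut Γ)))
  suffices hφ : ∀ φ : G →* AddAut Γ, (Set.range φ).Finite from hφ φ
  intro φ
  letI : Module.Finite ℤ Γ := Module.Finite.iff_addGroup_fg.mpr ‹_›
  set T : Submodule ℤ Γ := Submodule.torsion ℤ Γ with hT
  haveI : Module.Finite ℤ ↥T := Module.Finite.iff_fg.mpr (IsNoetherian.noetherian T)
  haveI hTfin : Finite ↥T := Module.finite_of_fg_torsion ↥T (Submodule.torsion_isTorsion)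
  haveI : Module.IsTorsionFree ℤ (Γ ⧸ T) := Submodule.QuotientTorsion.instIsTorsionFree
  haveI : Module.Free ℤ (Γ ⧸ T) := Module.free_of_finite_type_torsion_free'
  set ι := Module.Free.ChooseBasisIndex ℤ (Γ ⧸ T) with hι
  set b : Module.Basis ι ℤ (Γ ⧸ T) := Module.Free.chooseBasis ℤ (Γ ⧸ T) with hb
  -- the induced endomorphism of the quotient
  have hmap : ∀ f : AddAut Γ, T ≤ T.comap f.toAddMonoidHom.toIntLinearMap := by
    intro f x hx
    obtain ⟨a, ha⟩ := (Submodule.mem_torsion_iff (R := ℤ) x).mp hx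
    refine (Submodule.mem_comap).mpr ((Submodule.mem_torsion_iff (R := ℤ) _).mpr ⟨a, ?_⟩)
    have ha' : (a : ℤ) • x = 0 := ha
    show (a : ℤ) • (f x) = 0
    calc (a : ℤ) • f x = f ((a : ℤ) • x) := (map_zsmul f (a : ℤ) x).symm
    _ = f 0 := by rw [ha']
    _ = 0 := map_zero f
  let ψ : AddAut Γ →* Module.End ℤ (Γ ⧸ T) :=
    { toFun := fun f => Submodule.mapQ T T _ (hmap f)
      map_one' := by
        refine LinearMap.ext fun q => ?_
        obtain ⟨x, rfl⟩ := Submodule.Quotient.mk_surjective T q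
        rw [Submodule.mapQ_apply]
        rfl
      map_mul' := by
        intro f g
        refine LinearMap.ext fun q => ?_
        obtain ⟨x, rfl⟩ := Submodule.Quotient.mk_surjective T q
        simp only [Submodule.mapQ_apply, Module.End.mul_apply]
        rfl }
  let Ψ : AddAut Γ →* (Module.End ℤ (Γ ⧸ T))ˣ := ψ.toHomUnits
  let e := LinearMap.toMatrixAlgEquiv b
  let uem : (Module.End ℤ (Γ ⧸ T))ˣ →* (Matrix ι ι ℤ)ˣ :=
    Units.map e.toRingEquiv.toMonoidHom
  let U : AddAut Γ →* (Matrix ι ι ℤ)ˣ := uem.comp Ψ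
  let χ : G →* (Matrix ι ι ℤ)ˣ := U.comp φ
  let μ : (Matrix ι ι ℤ)ˣ →* (Matrix ι ι (ZMod 3))ˣ :=
    Units.map ((Int.castRingHom (ZMod 3)).mapMatrix.toMonoidHom)
  -- kernels agree
  have hker : (μ.comp χ).ker = χ.ker := by
    apply le_antisymm
    · intro g hg
      have hfin : IsOfFinOrder (χ g) := χ.isOfFinOrder (hG g)
      have hred : μ (χ g) = 1 := hg
      exact unit_eq_one_of_finOrder hfin hred
    · intro g hg
      have : χ g = 1 := hg
      show μ (χ g) = 1
      rw [this, map_one]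
  haveI : Finite ((Matrix ι ι (ZMod 3))ˣ) := inferInstance
  haveI hfinQ : Finite (G ⧸ (μ.comp χ).ker) :=
    Finite.of_equiv _ (QuotientGroup.quotientKerEquivRange (μ.comp χ)).symm.toEquiv
  haveI hfinrange : Finite ↥χ.range := by
    haveI : Finite (G ⧸ χ.ker) := hker ▸ hfinQ
    exact Finite.of_equiv _ (QuotientGroup.quotientKerEquivRange χ).toEquiv
  -- kernel of U is finite
  have hUker : ∀ f : AddAut Γ, f ∈ U.ker → ∀ x : Γ, f x - x ∈ T := by
    intro f hf x
    have h1 : Ψ f = 1 := by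
      have := Units.map_injective (f := e.toRingEquiv.toMonoidHom) e.injective
      exact this (by rw [map_one]; exact hf)
    have h2 : ψ f = 1 := by
      rw [← MonoidHom.coe_toHomUnits ψ f, h1, Units.val_one]
    have h3 : Submodule.Quotient.mk (p := T) (f x) = Submodule.Quotient.mk x := by
      have := congrFun (congrArg (DFunLike.coe) (congrArg LinearMap.toAddMonoidHom h2))
        (Submodule.Quotient.mk x)
      simpa [ψ, Submodule.mapQ_apply] using this
    exact (Submodule.Quotient.eq T).mp h3
  haveI hUkerFin : Finite ↥U.ker := by
    haveI := finite_addHom Γ ↥T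
    have hinj : Function.Injective (fun (f : ↥U.ker) =>
        ({ toFun := fun x => (⟨(f : AddAut Γ) x - x, hUker f f.2 x⟩ : ↥T)
           map_zero' := by ext; simp
           map_add' := by
             intro x y
             ext
             show (f : AddAut Γ) (x + y) - (x + y) = ((f : AddAut Γ) x - x) + ((f : AddAut Γ) y - y)
             rw [map_add]
             abel } : Γ →+ ↥T)) := by
      intro f g h
      apply Subtype.ext
      refine DFunLike.ext _ _ fun x => ?_
      have h1 := congrArg (fun (F : Γ →+ ↥T) => ((F x) : Γ)) h
      simp only at h1
      exact sub_left_injective h1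
    exact Finite.of_injective _ hinj
  -- assemble
  let v : ↥φ.range →* (Matrix ι ι ℤ)ˣ := U.comp φ.range.subtype
  haveI hvker : Finite ↥v.ker := by
    have hinj : Function.Injective (fun (f : ↥v.ker) =>
        (⟨((f : ↥φ.range) : AddAut Γ), f.2⟩ : ↥U.ker)) := by
      intro f g h
      simp only [Subtype.mk.injEq] at h
      exact Subtype.ext (Subtype.ext (by have h' := congrArg Subtype.val h; exact h'))
    exact Finite.of_injective _ hinj
  haveI hvrange : Finite ↥v.range := by
    have hle : v.range ≤ χ.range := by
      rintro x ⟨⟨y, g, rfl⟩, rfl⟩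
      exact ⟨g, rfl⟩
    refine Finite.of_injective (fun x => (⟨x.1, hle x.2⟩ : ↥χ.range)) ?_
    intro a c h
    simp only [Subtype.mk.injEq] at h
    exact Subtype.ext h
  haveI : Finite (↥φ.range ⧸ v.ker) :=
    Finite.of_equiv _ (QuotientGroup.quotientKerEquivRange v).symm.toEquiv
  haveI : Finite ↥φ.range :=
    Finite.of_equiv _ (Subgroup.groupEquivQuotientProdSubgroup (s := v.ker)).symm
  have : (φ.range : Set (AddAut Γ)).Finite := Set.finite_coe_iff.mp ‹_›
  simpa [MonoidHom.coe_range] using this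

end
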